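/- Let M be a real symmetric positive semidefinite (m+n)×(m+n) matrix written in block form M = [[A, C],[Cᵀ, B]], where A is m×m and B is n×n. Then det(M) ≤ det(A) · det(B) (Fischer's inequality). -/

import Mathlib

open Matrix Filter

private lemma psd_det_nonneg {k : Type*} [Fintype k] [DecidableEq k] {X : Matrix k k ℝ}
    (hX : X.PosSemidef) : 0 ≤ X.det := by
  rw [hX.1.det_eq_prod_eigenvalues]
  exact Finset.prod_nonneg fun i _ => by simpa using hX.eigenvalues_nonneg i

private lemma one_le_det_one_add {k : Type*} [Fintype k] [DecidableEq k] {T : Matrix k k ℝ}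
    (hT : T.PosSemidef) : 1 ≤ (1 + T).det := by
  set U := (hT.1.eigenvectorUnitary : Matrix k k ℝ) with hUdef
  have hU : U * star U = 1 := Matrix.mem_unitaryGroup_iff.mp hT.1.eigenvectorUnitary.2
  have hrep : 1 + T = U * (1 + diagonal (RCLike.ofReal ∘ hT.1.eigenvalues)) * star U := by
    rw [mul_add, mul_one, add_mul, hU]
    exact congrArg _ hT.1.spectral_theorem
  rw [hrep, det_mul_right_comm, hU, one_mul]
  have : (1 : Matrix k k ℝ) + diagonal (RCLike.ofReal ∘ hT.1.eigenvalues)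
      = diagonal (fun i => 1 + hT.1.eigenvalues i) := by
    rw [← diagonal_one, diagonal_add]
    rfl
  rw [this, det_diagonal]
  calc (1:ℝ) = ∏ _i : k, 1 := by simp
  _ ≤ ∏ i, (1 + hT.1.eigenvalues i) := by
      apply Finset.prod_le_prod (fun i _ => zero_le_one) fun i _ => by
        linarith [hT.eigenvalues_nonneg i]

open scoped MatrixOrder in
private lemma det_le_det_add {k : Type*} [Fintype k] [DecidableEq k] {X S : Matrix k k ℝ}
    (hX : X.PosSemidef) (hS : S.PosSemidef) : X.det ≤ (X + S).det := by
  rcases eq_or_ne X.det 0 with h | h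
  · rw [h]; exact psd_det_nonneg (hX.add hS)
  · set R := CFC.sqrt X with hRdef
    have hR : R * R = X := CFC.sqrt_mul_sqrt_self X hX.nonneg
    have hRdet : IsUnit R.det := by
      refine isUnit_iff_ne_zero.mpr fun h0 => h ?_
      rw [← hR, det_mul, h0, zero_mul]
    haveI : Invertible R := R.invertibleOfIsUnitDet hRdet
    have hRherm : R⁻¹.IsHermitian := (CFC.sqrt_nonneg X).posSemidef.1.inv
    have hT : (R⁻¹ * S * R⁻¹).PosSemidef := by
      have := hS.mul_mul_conjTranspose_same R⁻¹
      rwa [hRherm.eq] at this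
    have hrep : X + S = R * (1 + R⁻¹ * S * R⁻¹) * R := by
      rw [mul_add, mul_one, add_mul, hR]
      congr 1
      rw [← Matrix.mul_assoc, ← Matrix.mul_assoc, Matrix.mul_nonsing_inv _ hRdet, Matrix.one_mul,
        Matrix.mul_assoc, Matrix.nonsing_inv_mul _ hRdet, Matrix.mul_one]
    rw [hrep, det_mul, det_mul, mul_comm R.det, mul_assoc, ← det_mul, hR]
    nth_rewrite 1 [← one_mul X.det]
    exact mul_le_mul_of_nonneg_right (one_le_det_one_add hT) (psd_det_nonneg hX)

private lemma fischer_posdef {m n : ℕ} {A : Matrix (Fin m) (Fin m) ℝ} {B : Matrix (Fin n) (Fin n) ℝ}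
    {C : Matrix (Fin m) (Fin n) ℝ} (hA : A.PosDef)
    (hM : (Matrix.fromBlocks A C C.transpose B).PosSemidef) :
    (Matrix.fromBlocks A C C.transpose B).det ≤ A.det * B.det := by
  haveI : Invertible A := A.invertibleOfIsUnitDet hA.det_pos.ne'.isUnit
  have hCt : C.transpose = Cᴴ := (conjTranspose_eq_transpose_of_trivial C).symm
  rw [hCt] at hM ⊢
  have hschur : (B - Cᴴ * A⁻¹ * C).PosSemidef :=
    (PosDef.fromBlocks₁₁ C B hA).mp hM
  have hS : (Cᴴ * A⁻¹ * C).PosSemidef := hA.inv.posSemidef.conjTranspose_mul_mul_same C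
  rw [det_fromBlocks₁₁, invOf_eq_nonsing_inv]
  have : (B - Cᴴ * A⁻¹ * C).det ≤ B.det := by
    have := det_le_det_add hschur hS
    rwa [sub_add_cancel] at this
  exact mul_le_mul_of_nonneg_left this (le_of_lt hA.det_pos)

theorem stmt_13 (m n : ℕ) (A : Matrix (Fin m) (Fin m) ℝ) (B : Matrix (Fin n) (Fin n) ℝ)
    (C : Matrix (Fin m) (Fin n) ℝ)
    (hM : (Matrix.fromBlocks A C C.transpose B).PosSemidef) :
    (Matrix.fromBlocks A C C.transpose B).det ≤ A.det * B.det := by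
  have hApsd : A.PosSemidef := by
    exact hM.submatrix (Sum.inl : Fin m → Fin m ⊕ Fin n)
  have key : ∀ ε : ℝ, 0 < ε →
      (Matrix.fromBlocks A C C.transpose B + ε • 1).det
        ≤ (A + ε • 1).det * (B + ε • 1).det := by
    intro ε hε
    have hone : (ε • (1 : Matrix (Fin m ⊕ Fin n) (Fin m ⊕ Fin n) ℝ))
        = Matrix.fromBlocks (ε • 1) 0 0 (ε • 1) := by
      rw [← Matrix.fromBlocks_one, Matrix.fromBlocks_smul]
      simp
    have hsplit : Matrix.fromBlocks A C C.transpose B + ε • 1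
        = Matrix.fromBlocks (A + ε • 1) C C.transpose (B + ε • 1) := by
      rw [hone, Matrix.fromBlocks_add]
      simp
    have hεpd : ∀ (k : Type) [Fintype k] [DecidableEq k],
        (ε • (1 : Matrix k k ℝ)).PosDef := by
      intro k _ _
      rw [Matrix.smul_one_eq_diagonal]
      exact posDef_diagonal_iff.mpr fun _ => hε
    have hApd : (A + ε • 1).PosDef := Matrix.PosDef.posSemidef_add hApsd (hεpd (Fin m))
    have hMpsd : (Matrix.fromBlocks (A + ε • 1) C C.transpose (B + ε • 1)).PosSemidef := by
      rw [← hsplit]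
      exact hM.add (hεpd (Fin m ⊕ Fin n)).posSemidef
    rw [hsplit]
    exact fischer_posdef hApd hMpsd
  have hf : Tendsto (fun ε : ℝ => (Matrix.fromBlocks A C C.transpose B + ε • 1).det)
      (nhdsWithin 0 (Set.Ioi 0)) (nhds (Matrix.fromBlocks A C C.transpose B).det) := by
    have hc : Continuous fun ε : ℝ => (Matrix.fromBlocks A C C.transpose B + ε • 1).det :=
      (continuous_const.add (continuous_id.smul continuous_const)).matrix_det
    have := (hc.tendsto 0).mono_left (nhdsWithin_le_nhds (s := Set.Ioi 0))
    simpa using this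
  have hg : Tendsto (fun ε : ℝ => (A + ε • 1).det * (B + ε • 1).det)
      (nhdsWithin 0 (Set.Ioi 0)) (nhds (A.det * B.det)) := by
    have hc : Continuous fun ε : ℝ => (A + ε • 1).det * (B + ε • 1).det :=
      ((continuous_const.add (continuous_id.smul continuous_const)).matrix_det).mul
        ((continuous_const.add (continuous_id.smul continuous_const)).matrix_det)
    have := (hc.tendsto 0).mono_left (nhdsWithin_le_nhds (s := Set.Ioi 0))
    simpa using this
  exact le_of_tendsto_of_tendsto hf hg
    (eventually_nhdsWithin_of_forall fun ε hε => key ε hε)
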